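/- Let p, q be positive integers, Σ̂ a real symmetric positive definite p×p matrix, R a real symmetric positive definite q×q matrix, H a real q×p matrix, x̂ᶠ ∈ ℝᵖ and y ∈ ℝ^q. Define J : ℝᵖ → ℝ by J(x) = (1/2)[ (x − x̂ᶠ)ᵀ Σ̂⁻¹ (x − x̂ᶠ) + (y − H x)ᵀ R⁻¹ (y − H x) ]. Then the point x* = x̂ᶠ + Σ̂ Hᵀ (H Σ̂ Hᵀ + R)⁻¹ (y − H x̂ᶠ) is the unique global minimizer of J: for every x ∈ ℝᵖ with x ≠ x*, J(x) > J(x*). -/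

import Mathlib

open Matrix

lemma dsymm {n : ℕ} (M : Matrix (Fin n) (Fin n) ℝ) (hM : Mᵀ = M) (a b : Fin n → ℝ) :
    a ⬝ᵥ M *ᵥ b = b ⬝ᵥ M *ᵥ a := by
  rw [dotProduct_mulVec, ← mulVec_transpose, hM, dotProduct_comm]

lemma mvdot {p q : ℕ} (H : Matrix (Fin q) (Fin p) ℝ) (u : Fin p → ℝ) (v : Fin q → ℝ) :
    (H *ᵥ u) ⬝ᵥ v = u ⬝ᵥ Hᵀ *ᵥ v := by
  rw [dotProduct_comm, dotProduct_mulVec, ← mulVec_transpose, dotProduct_comm]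

lemma herm_t {n : ℕ} {M : Matrix (Fin n) (Fin n) ℝ} (h : M.IsHermitian) : Mᵀ = M := by
  have : Mᴴ = Mᵀ := by ext i j; simp [conjTranspose_apply]
  rw [← this, h]


/-- For `Σ̂` symmetric positive definite (p×p), `R` symmetric positive
definite (q×q), `H` a q×p matrix, `x̂ᶠ ∈ ℝᵖ`, `y ∈ ℝ^q` and the objective
`J(x) = (1/2)[(x − x̂ᶠ)ᵀ Σ̂⁻¹ (x − x̂ᶠ) + (y − H x)ᵀ R⁻¹ (y − H x)]`, the point
`x* = x̂ᶠ + Σ̂ Hᵀ (H Σ̂ Hᵀ + R)⁻¹ (y − H x̂ᶠ)` is the unique global minimizer of `J`: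
`J(x) > J(x*)` for every `x ≠ x*`. -/
theorem enkf_analysis_unique_minimizer (p q : ℕ) (hp : 0 < p) (hq : 0 < q)
    (Shat : Matrix (Fin p) (Fin p) ℝ) (hShat : Shat.PosDef)
    (R : Matrix (Fin q) (Fin q) ℝ) (hR : R.PosDef)
    (H : Matrix (Fin q) (Fin p) ℝ) (xf : Fin p → ℝ) (y : Fin q → ℝ)
    (J : (Fin p → ℝ) → ℝ)
    (hJ : ∀ x, J x = (1 / 2) * ((x - xf) ⬝ᵥ (Shat⁻¹ *ᵥ (x - xf)) +
        (y - H *ᵥ x) ⬝ᵥ (R⁻¹ *ᵥ (y - H *ᵥ x)))) :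
    ∀ x : Fin p → ℝ,
      x ≠ xf + (Shat * Hᵀ * (H * Shat * Hᵀ + R)⁻¹) *ᵥ (y - H *ᵥ xf) →
        J (xf + (Shat * Hᵀ * (H * Shat * Hᵀ + R)⁻¹) *ᵥ (y - H *ᵥ xf)) < J x := by
  intro x hx
  set S : Matrix (Fin q) (Fin q) ℝ := H * Shat * Hᵀ + R with hSdef
  set d : Fin q → ℝ := y - H *ᵥ xf with hddef
  set e : Fin p → ℝ := (Shat * Hᵀ * S⁻¹) *ᵥ d with hedef
  have hHt : Hᴴ = Hᵀ := by ext i j; simp [conjTranspose_apply]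
  have hS : S.PosDef := by
    have h0 := hShat.posSemidef.mul_mul_conjTranspose_same H
    rw [hHt] at h0
    exact Matrix.PosDef.posSemidef_add h0 hR
  have h1 : Shat⁻¹ * Shat = 1 :=
    nonsing_inv_mul _ ((isUnit_iff_isUnit_det Shat).mp hShat.isUnit)
  have h2 : S * S⁻¹ = 1 :=
    mul_nonsing_inv _ ((isUnit_iff_isUnit_det S).mp hS.isUnit)
  have h3 : R⁻¹ * R = 1 :=
    nonsing_inv_mul _ ((isUnit_iff_isUnit_det R).mp hR.isUnit)
  -- key matrix identity
  have hKmat : Shat⁻¹ * (Shat * Hᵀ * S⁻¹) =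
      Hᵀ * R⁻¹ - Hᵀ * R⁻¹ * H * (Shat * Hᵀ * S⁻¹) := by
    have hL : Shat⁻¹ * (Shat * Hᵀ * S⁻¹) = Hᵀ * S⁻¹ := by
      rw [Matrix.mul_assoc Shat, ← Matrix.mul_assoc Shat⁻¹ Shat, h1, Matrix.one_mul]
    have hSR : H * Shat * Hᵀ = S - R := by rw [hSdef]; abel
    have hRc : Hᵀ * R⁻¹ * H * (Shat * Hᵀ * S⁻¹) = Hᵀ * R⁻¹ - Hᵀ * S⁻¹ := by
      have hstep : Hᵀ * R⁻¹ * H * (Shat * Hᵀ * S⁻¹) = Hᵀ * R⁻¹ * (H * Shat * Hᵀ) * S⁻¹ := by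
        simp only [Matrix.mul_assoc]
      rw [hstep, hSR, Matrix.mul_sub, Matrix.sub_mul,
        Matrix.mul_assoc (Hᵀ * R⁻¹) S S⁻¹, h2, Matrix.mul_one,
        Matrix.mul_assoc Hᵀ R⁻¹ R, h3, Matrix.mul_one]
    rw [hL, hRc]; abel
  -- key vector identity
  have hkey : Shat⁻¹ *ᵥ e = Hᵀ *ᵥ (R⁻¹ *ᵥ (d - H *ᵥ e)) := by
    rw [hedef]
    simp only [mulVec_mulVec]
    rw [hKmat]
    simp only [Matrix.sub_mulVec, Matrix.mulVec_sub, mulVec_mulVec, Matrix.mul_assoc]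
  set xstar : Fin p → ℝ := xf + e with hxsdef
  set u : Fin p → ℝ := x - xstar with hudef
  have hu : u ≠ 0 := sub_ne_zero.mpr hx
  have hSit : (Shat⁻¹)ᵀ = Shat⁻¹ := herm_t hShat.inv.isHermitian
  have hRt : (R⁻¹)ᵀ = R⁻¹ := herm_t hR.inv.isHermitian
  have hx1 : x - xf = u + e := by rw [hudef, hxsdef]; abel
  have hx2 : y - H *ᵥ x = (d - H *ᵥ e) - H *ᵥ u := by
    have hxe : x = u + e + xf := by rw [hudef, hxsdef]; abel
    rw [hxe, hddef]
    simp only [mulVec_add]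
    abel
  have hJs : J xstar = (1/2) * (e ⬝ᵥ Shat⁻¹ *ᵥ e + (d - H *ᵥ e) ⬝ᵥ R⁻¹ *ᵥ (d - H *ᵥ e)) := by
    rw [hJ]
    have h5 : xstar - xf = e := by rw [hxsdef]; abel
    have h6 : y - H *ᵥ xstar = d - H *ᵥ e := by
      rw [hxsdef, hddef, mulVec_add]; abel
    rw [h5, h6]
  have hJx : J x = J xstar + (1/2) * (u ⬝ᵥ Shat⁻¹ *ᵥ u + (H *ᵥ u) ⬝ᵥ R⁻¹ *ᵥ (H *ᵥ u)) := by
    rw [hJ, hJs, hx1, hx2]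
    have c1 : e ⬝ᵥ Shat⁻¹ *ᵥ u = u ⬝ᵥ Shat⁻¹ *ᵥ e := dsymm _ hSit _ _
    have a2 : d ⬝ᵥ R⁻¹ *ᵥ (H *ᵥ u) = (H *ᵥ u) ⬝ᵥ R⁻¹ *ᵥ d := (dsymm _ hRt _ _).symm
    have a3 : (H *ᵥ e) ⬝ᵥ R⁻¹ *ᵥ (H *ᵥ u) = (H *ᵥ u) ⬝ᵥ R⁻¹ *ᵥ (H *ᵥ e) := dsymm _ hRt _ _
    have c5 : u ⬝ᵥ Shat⁻¹ *ᵥ e = (H *ᵥ u) ⬝ᵥ R⁻¹ *ᵥ d - (H *ᵥ u) ⬝ᵥ R⁻¹ *ᵥ (H *ᵥ e) := by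
      rw [hkey, ← mvdot]
      simp only [mulVec_sub, dotProduct_sub]
    simp only [dotProduct_add, add_dotProduct, dotProduct_sub, sub_dotProduct,
      mulVec_add, mulVec_sub]
    rw [c1, a2, a3, c5]
    ring
  have hpos1 : 0 < u ⬝ᵥ Shat⁻¹ *ᵥ u := by
    have := hShat.inv.dotProduct_mulVec_pos hu
    simpa using this
  have hpos2 : 0 ≤ (H *ᵥ u) ⬝ᵥ R⁻¹ *ᵥ (H *ᵥ u) := by
    have := hR.inv.posSemidef.dotProduct_mulVec_nonneg (H *ᵥ u)
    simpa using this
  rw [hJx]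
  linarith
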